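/- Let f : {0,1}^n → {0,1} be monotone, let w ≥ 1 be an integer and let c be a real cutoff level. Then the probability that a random walk of length w down the Boolean lattice with cutoff at level c, from a uniform start, starts at a point v with f(v) = 1 and ends at a point u with f(u) = 0 equals the sum, over all influential edges (y, x) of f with h(x) ≥ ⌈c⌉, of the probability that the walk traverses (y, x); in particular, for monotone f the traversal events of distinct influential edges are pairwise disjoint. -/

import Mathlib

/-- Hamming weight of a point of the Boolean lattice `{0,1}^n`. -/
def hw {n : ℕ} (x : Fin n → Bool) : ℕ := (Finset.univ.filter (fun i => x i = true)).card

/-- `bflip x i` is `x` with its `i`-th coordinate flipped. -/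
def bflip {n : ℕ} (x : Fin n → Bool) (i : Fin n) : Fin n → Bool :=
  Function.update x i (!x i)

/-- The position of the walk after `t` steps, when the walk starts at `v` and
successively flips to 0 the coordinates of `v` that equal 1, in the order given by the
linear ordering `σ` of these coordinates. -/
def walkPos {n : ℕ} (v : Fin n → Bool) (σ : Fin (hw v) ≃ {i : Fin n // v i = true})
    (t : ℕ) : Fin n → Bool :=
  fun i => v i && ! decide (∃ s : Fin (hw v), (s : ℕ) < t ∧ (σ s).val = i)

/-- The number of steps performed by a random walk of length `w` down the Boolean
lattice with cutoff at level `c`, when started at `v`: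
`min(w, max(0, h(v) − ⌈c⌉))`. -/
noncomputable def nsteps {n : ℕ} (w : ℕ) (c : ℝ) (v : Fin n → Bool) : ℕ :=
  min w ((hw v : ℤ) - ⌈c⌉).toNat

/-- The probability of an event `P` in the finite probability space of pairs `(v, σ)`,
where `v` is uniform in `{0,1}^n` and `σ` is an independent uniformly random linear
ordering of the coordinates on which `v` equals 1. -/
noncomputable def walkProb {n : ℕ}
    (P : (v : Fin n → Bool) → (Fin (hw v) ≃ {i : Fin n // v i = true}) → Prop) : ℝ :=
  (2 ^ n : ℝ)⁻¹ * ∑ v : Fin n → Bool,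
    (Nat.card {σ : Fin (hw v) ≃ {i : Fin n // v i = true} // P v σ} : ℝ) /
      (Nat.factorial (hw v))

/-- The walk `(v, σ)` (of length `w`, with cutoff at level `c`) traverses the edge
`(y, x)` if at some step it moves from the point `y` to the point `x`. -/
def traverses {n : ℕ} (w : ℕ) (c : ℝ) (y x : Fin n → Bool)
    (v : Fin n → Bool) (σ : Fin (hw v) ≃ {i : Fin n // v i = true}) : Prop :=
  ∃ t : ℕ, t < nsteps w c v ∧ walkPos v σ t = y ∧ walkPos v σ (t + 1) = x

/-- `f` is monotone if `x ≤ y` coordinatewise implies `f(x) ≤ f(y)`. -/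
def MonotoneBF {n : ℕ} (f : (Fin n → Bool) → Bool) : Prop :=
  ∀ x y : Fin n → Bool, (∀ i, x i ≤ y i) → f x ≤ f y

lemma walkPos_zero {n : ℕ} (v : Fin n → Bool) (σ : Fin (hw v) ≃ {i : Fin n // v i = true}) :
    walkPos v σ 0 = v := by
  funext i; simp [walkPos]

lemma walkPos_le {n : ℕ} (v : Fin n → Bool) (σ : Fin (hw v) ≃ {i : Fin n // v i = true})
    {t t' : ℕ} (h : t ≤ t') (i : Fin n) : walkPos v σ t' i ≤ walkPos v σ t i := by
  simp only [walkPos, Bool.le_iff_imp, Bool.and_eq_true, Bool.not_eq_true',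
    decide_eq_false_iff_not]
  rintro ⟨hv, hn⟩
  exact ⟨hv, fun ⟨s, hs, he⟩ => hn ⟨s, lt_of_lt_of_le hs h, he⟩⟩

lemma walkPos_coord {n : ℕ} (v : Fin n → Bool) (σ : Fin (hw v) ≃ {i : Fin n // v i = true})
    {t : ℕ} (ht : t < hw v) : walkPos v σ t (σ ⟨t, ht⟩).val = true := by
  simp only [walkPos, Bool.and_eq_true, Bool.not_eq_true', decide_eq_false_iff_not]
  refine ⟨(σ ⟨t, ht⟩).property, ?_⟩
  rintro ⟨s, hs, he⟩
  have : σ s = σ ⟨t, ht⟩ := Subtype.ext he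
  have : s = ⟨t, ht⟩ := σ.injective this
  subst this; exact absurd hs (lt_irrefl _)

lemma walkPos_succ {n : ℕ} (v : Fin n → Bool) (σ : Fin (hw v) ≃ {i : Fin n // v i = true})
    {t : ℕ} (ht : t < hw v) :
    walkPos v σ (t + 1) = Function.update (walkPos v σ t) (σ ⟨t, ht⟩).val false := by
  funext i
  by_cases hi : i = (σ ⟨t, ht⟩).val
  · subst hi
    rw [Function.update_self]
    have hd : decide (∃ s : Fin (hw v), (s : ℕ) < t + 1 ∧ (σ s).val = (σ ⟨t, ht⟩).val) = true :=
      decide_eq_true ⟨⟨t, ht⟩, Nat.lt_succ_self t, rfl⟩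
    simp [walkPos, hd]
    exact fun _ => ⟨⟨t, ht⟩, le_refl t, rfl⟩
  · rw [Function.update_of_ne hi]
    simp only [walkPos]
    congr 1
    congr 1
    rw [decide_eq_decide]
    constructor
    · rintro ⟨s, hs, he⟩
      rcases Nat.lt_succ_iff_lt_or_eq.mp hs with h | h
      · exact ⟨s, h, he⟩
      · exfalso
        have : s = ⟨t, ht⟩ := Fin.ext h
        subst this; exact hi he.symm
    · rintro ⟨s, hs, he⟩
      exact ⟨s, Nat.lt_succ_of_lt hs, he⟩

lemma walkPos_stable {n : ℕ} (v : Fin n → Bool) (σ : Fin (hw v) ≃ {i : Fin n // v i = true})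
    {t : ℕ} (ht : hw v ≤ t) : walkPos v σ t = fun _ => false := by
  funext i
  by_cases hv : v i = true
  · have hd : decide (∃ s : Fin (hw v), (s : ℕ) < t ∧ (σ s).val = i) = true :=
      decide_eq_true ⟨σ.symm ⟨i, hv⟩, lt_of_lt_of_le (σ.symm ⟨i, hv⟩).isLt ht, by simp⟩
    simp [walkPos, hd]
  · simp [walkPos, hv]

lemma hw_update_false {n : ℕ} (x : Fin n → Bool) (i : Fin n) (hx : x i = true) :
    hw (Function.update x i false) = hw x - 1 := by
  unfold hw
  have : (Finset.univ.filter (fun j => Function.update x i false j = true))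
      = (Finset.univ.filter (fun j => x j = true)).erase i := by
    ext j
    simp only [Finset.mem_filter, Finset.mem_erase, Finset.mem_univ, true_and]
    by_cases hj : j = i
    · subst hj; simp
    · rw [Function.update_of_ne hj]; tauto
  rw [this, Finset.card_erase_of_mem (by simp [hx])]

lemma hw_walkPos {n : ℕ} (v : Fin n → Bool) (σ : Fin (hw v) ≃ {i : Fin n // v i = true})
    {t : ℕ} (ht : t ≤ hw v) : hw (walkPos v σ t) = hw v - t := by
  induction t with
  | zero => rw [walkPos_zero]; omega
  | succ k ih =>
    have hk : k < hw v := ht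
    rw [walkPos_succ v σ hk, hw_update_false _ _ (walkPos_coord v σ hk), ih (le_of_lt hk)]
    omega

lemma exists_flip (g : ℕ → Bool) (T : ℕ) (h0 : g 0 = true) (hT : g T = false) :
    ∃ t, t < T ∧ g t = true ∧ g (t + 1) = false := by
  induction T with
  | zero => rw [h0] at hT; exact absurd hT (by simp)
  | succ k ih =>
    by_cases hk : g k = true
    · exact ⟨k, Nat.lt_succ_self k, hk, hT⟩
    · obtain ⟨t, h1, h2, h3⟩ := ih (Bool.not_eq_true _ ▸ hk)
      exact ⟨t, Nat.lt_succ_of_lt h1, h2, h3⟩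

lemma bflip_eq_update {n : ℕ} (y : Fin n → Bool) (i : Fin n) (h : y i = true) :
    bflip y i = Function.update y i false := by
  rw [bflip, h]; rfl

lemma bflip_le {n : ℕ} (y : Fin n → Bool) (i : Fin n) (h : y i = true) (j : Fin n) :
    bflip y i j ≤ y j := by
  rw [bflip_eq_update y i h]
  by_cases hj : j = i
  · subst hj; rw [Function.update_self]; exact Bool.false_le _
  · rw [Function.update_of_ne hj]

lemma influential_vals {n : ℕ} {f : (Fin n → Bool) → Bool} (hmono : MonotoneBF f)
    {y : Fin n → Bool} {i : Fin n} (h1 : y i = true) (h2 : f y ≠ f (bflip y i)) :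
    f y = true ∧ f (bflip y i) = false := by
  have hle := hmono _ _ (bflip_le y i h1)
  revert hle h2
  cases f y <;> cases f (bflip y i) <;> simp

lemma walk_f_antitone {n : ℕ} {f : (Fin n → Bool) → Bool} (hmono : MonotoneBF f)
    (v : Fin n → Bool) (σ : Fin (hw v) ≃ {i : Fin n // v i = true})
    {t t' : ℕ} (h : t ≤ t') : f (walkPos v σ t') ≤ f (walkPos v σ t) :=
  hmono _ _ (fun i => walkPos_le v σ h i)

lemma disjoint_traverses {n : ℕ} (f : (Fin n → Bool) → Bool) (hmono : MonotoneBF f)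
    (w : ℕ) (c : ℝ) :
    ∀ p q : (Fin n → Bool) × Fin n,
      p.1 p.2 = true → f p.1 ≠ f (bflip p.1 p.2) →
      q.1 q.2 = true → f q.1 ≠ f (bflip q.1 q.2) → p ≠ q →
      ∀ (v : Fin n → Bool) (σ : Fin (hw v) ≃ {i : Fin n // v i = true}),
        ¬(traverses w c p.1 (bflip p.1 p.2) v σ ∧
          traverses w c q.1 (bflip q.1 q.2) v σ) := by
  rintro p q hp1 hp2 hq1 hq2 hpq v σ ⟨⟨t, htT, hty, htx⟩, ⟨t', ht'T, ht'y, ht'x⟩⟩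
  obtain ⟨hfp, hfpx⟩ := influential_vals hmono hp1 hp2
  obtain ⟨hfq, hfqx⟩ := influential_vals hmono hq1 hq2
  have htt' : t = t' := by
    by_contra hne
    rcases Nat.lt_or_ge t t' with h | h
    · have hle : f (walkPos v σ t') ≤ f (walkPos v σ (t + 1)) := walk_f_antitone hmono v σ h
      rw [ht'y, htx, hfq, hfpx] at hle
      exact absurd hle (by simp)
    · have hle : f (walkPos v σ t) ≤ f (walkPos v σ (t' + 1)) := walk_f_antitone hmono v σ (by omega)
      rw [hty, ht'x, hfp, hfqx] at hle
      exact absurd hle (by simp)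
  subst htt'
  have hy : p.1 = q.1 := by rw [← hty, ← ht'y]
  have hx : bflip p.1 p.2 = bflip q.1 q.2 := by rw [← htx, ← ht'x]
  have hii : p.2 = q.2 := by
    by_contra hne
    have := congrFun hx p.2
    rw [bflip_eq_update _ _ hp1, bflip_eq_update _ _ hq1, Function.update_self,
      Function.update_of_ne hne, ← hy, hp1] at this
    exact absurd this (by simp)
  exact hpq (Prod.ext hy hii)

lemma event_iff {n : ℕ} (f : (Fin n → Bool) → Bool) (hmono : MonotoneBF f)
    (w : ℕ) (c : ℝ) (v : Fin n → Bool) (σ : Fin (hw v) ≃ {i : Fin n // v i = true}) :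
    (f v = true ∧ f (walkPos v σ (nsteps w c v)) = false) ↔
    ∃ p : (Fin n → Bool) × Fin n,
      (p.1 p.2 = true ∧ f p.1 ≠ f (bflip p.1 p.2) ∧ ⌈c⌉ ≤ (hw (bflip p.1 p.2) : ℤ)) ∧
      traverses w c p.1 (bflip p.1 p.2) v σ := by
  constructor
  · rintro ⟨hv, hu⟩
    obtain ⟨t, htT, hgt, hgt1⟩ := exists_flip (fun t => f (walkPos v σ t)) (nsteps w c v)
      (by rw [walkPos_zero]; exact hv) hu
    have htlt : t < hw v := by
      by_contra hge
      push_neg at hge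
      rw [walkPos_stable v σ hge, walkPos_stable v σ (by omega)] at *
      rw [hgt] at hgt1
      exact absurd hgt1 (by simp)
    set i := (σ ⟨t, htlt⟩).val with hi
    have hyi : walkPos v σ t i = true := walkPos_coord v σ htlt
    have hstep : walkPos v σ (t + 1) = bflip (walkPos v σ t) i := by
      rw [walkPos_succ v σ htlt, bflip_eq_update _ _ hyi]
    have hne : f (walkPos v σ t) ≠ f (bflip (walkPos v σ t) i) := by
      rw [← hstep, hgt, hgt1]; simp
    have hTle : nsteps w c v ≤ ((hw v : ℤ) - ⌈c⌉).toNat := min_le_right _ _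
    have ht1 : t + 1 ≤ hw v := htlt
    have hwx : (hw (bflip (walkPos v σ t) i) : ℤ) = (hw v : ℤ) - (t + 1) := by
      rw [← hstep, hw_walkPos v σ ht1]
      omega
    refine ⟨(walkPos v σ t, i), ⟨hyi, hne, ?_⟩, ⟨t, htT, rfl, hstep⟩⟩
    rw [hwx]
    omega
  · rintro ⟨p, ⟨hp1, hp2, _⟩, t, htT, hty, htx⟩
    obtain ⟨hfp, hfpx⟩ := influential_vals hmono hp1 hp2
    constructor
    · have := walk_f_antitone (f := f) hmono v σ (Nat.zero_le t)
      rw [walkPos_zero, hty, hfp] at this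
      exact Bool.eq_true_of_true_le this
    · have := walk_f_antitone (f := f) hmono v σ (show t + 1 ≤ nsteps w c v from htT)
      rw [htx, hfpx] at this
      exact Bool.eq_false_iff.mpr (fun h => by rw [h] at this; exact absurd this (by simp))

/-- For monotone `f`, the probability that a random walk of length `w` down the Boolean
lattice with cutoff at level `c` starts at `v` with `f(v) = 1` and ends at `u` with
`f(u) = 0` equals the sum, over all influential edges `(y, x)` of `f` with
`h(x) ≥ ⌈c⌉`, of the probability that the walk traverses `(y, x)`; moreover the
traversal events of distinct influential edges are pairwise disjoint. -/
lemma nat_card_subtype {α : Type*} [Fintype α] (p : α → Prop) [DecidablePred p] :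
    Nat.card {x // p x} = (Finset.univ.filter p).card := by
  rw [Nat.card_eq_fintype_card]
  exact Fintype.card_subtype p

theorem prob_walk_decomposition (n : ℕ) (f : (Fin n → Bool) → Bool)
    (hmono : MonotoneBF f) (w : ℕ) (hw1 : 1 ≤ w) (c : ℝ) :
    walkProb (fun v σ => f v = true ∧ f (walkPos v σ (nsteps w c v)) = false)
      = ∑ e ∈ Finset.univ.filter (fun p : (Fin n → Bool) × Fin n =>
            p.1 p.2 = true ∧ f p.1 ≠ f (bflip p.1 p.2) ∧
            ⌈c⌉ ≤ (hw (bflip p.1 p.2) : ℤ)),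
          walkProb (fun v σ => traverses w c e.1 (bflip e.1 e.2) v σ) ∧
    ∀ p q : (Fin n → Bool) × Fin n,
      p.1 p.2 = true → f p.1 ≠ f (bflip p.1 p.2) →
      q.1 q.2 = true → f q.1 ≠ f (bflip q.1 q.2) → p ≠ q →
      ∀ (v : Fin n → Bool) (σ : Fin (hw v) ≃ {i : Fin n // v i = true}),
        ¬(traverses w c p.1 (bflip p.1 p.2) v σ ∧
          traverses w c q.1 (bflip q.1 q.2) v σ) := by
  classical
  refine ⟨?_, fun p q hp1 hp2 hq1 hq2 hpq v σ hb =>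
    disjoint_traverses f hmono w c p q hp1 hp2 hq1 hq2 hpq v σ hb⟩
  set S := Finset.univ.filter (fun p : (Fin n → Bool) × Fin n =>
      p.1 p.2 = true ∧ f p.1 ≠ f (bflip p.1 p.2) ∧ ⌈c⌉ ≤ (hw (bflip p.1 p.2) : ℤ)) with hS
  have key : ∀ v : Fin n → Bool,
      (Nat.card {σ : Fin (hw v) ≃ {i : Fin n // v i = true} //
        f v = true ∧ f (walkPos v σ (nsteps w c v)) = false} : ℕ)
      = ∑ e ∈ S, Nat.card {σ : Fin (hw v) ≃ {i : Fin n // v i = true} //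
          traverses w c e.1 (bflip e.1 e.2) v σ} := by
    intro v
    have hdis : ∀ e₁ ∈ S, ∀ e₂ ∈ S, e₁ ≠ e₂ →
        Disjoint (Finset.univ.filter
            (fun σ : Fin (hw v) ≃ {i : Fin n // v i = true} =>
              traverses w c e₁.1 (bflip e₁.1 e₁.2) v σ))
          (Finset.univ.filter
            (fun σ : Fin (hw v) ≃ {i : Fin n // v i = true} =>
              traverses w c e₂.1 (bflip e₂.1 e₂.2) v σ)) := by
      intro e₁ he₁ e₂ he₂ hne
      rw [hS, Finset.mem_filter] at he₁ he₂
      rw [Finset.disjoint_left]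
      intro σ h₁ h₂
      rw [Finset.mem_filter] at h₁ h₂
      exact disjoint_traverses f hmono w c e₁ e₂ he₁.2.1 he₁.2.2.1 he₂.2.1 he₂.2.2.1
        hne v σ ⟨h₁.2, h₂.2⟩
    have h1 : (Finset.univ.filter (fun σ : Fin (hw v) ≃ {i : Fin n // v i = true} =>
        f v = true ∧ f (walkPos v σ (nsteps w c v)) = false))
        = S.biUnion (fun e => Finset.univ.filter
            (fun σ : Fin (hw v) ≃ {i : Fin n // v i = true} =>
              traverses w c e.1 (bflip e.1 e.2) v σ)) := by
      ext σ
      simp only [Finset.mem_filter, Finset.mem_biUnion, Finset.mem_univ, true_and, hS]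
      exact Iff.trans (event_iff f hmono w c v σ) (by tauto)
    rw [nat_card_subtype, h1, Finset.card_biUnion hdis]
    exact Finset.sum_congr rfl fun e _ => (nat_card_subtype _).symm
  have key2 : ∀ v : Fin n → Bool,
      (Nat.card {σ : Fin (hw v) ≃ {i : Fin n // v i = true} //
        f v = true ∧ f (walkPos v σ (nsteps w c v)) = false} : ℝ) / (Nat.factorial (hw v))
      = ∑ e ∈ S, (Nat.card {σ : Fin (hw v) ≃ {i : Fin n // v i = true} //
          traverses w c e.1 (bflip e.1 e.2) v σ} : ℝ) / (Nat.factorial (hw v)) := by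
    intro v
    rw [← Finset.sum_div]
    congr 1
    rw [key v]
    push_cast
    rfl
  simp only [walkProb]
  rw [← Finset.mul_sum]
  congr 1
  rw [Finset.sum_congr rfl fun v _ => key2 v]
  exact Finset.sum_comm
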